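/- Let M be a nontrivial cut of G, let H_1 and H_2 be the two connected components of G − M, and let R be a set consisting of all vertices of M together with exactly one endpoint of each edge of M. If R is different from both boundaries T^M_1 and T^M_2 (i.e., the chosen endpoints do not all lie in the same component), then R is a cutset of G, and G − R has exactly two connected components: one containing H_1 \ R and the other containing H_2 \ R. -/

import Mathlib

namespace Paper

variable {V : Type*}

/-- `S ⊆ V(G)` is a cutset of `G`: the graph `G − S` is disconnected. -/
def IsCutset (G : SimpleGraph V) (S : Set V) : Prop :=
  ¬ (G.induce (Sᶜ : Set V)).Connected

/-- A 3-cutset: a cutset of exactly 3 vertices. -/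
def IsThreeCutset (G : SimpleGraph V) (S : Set V) : Prop :=
  S.ncard = 3 ∧ IsCutset G S

/-- `G` is triconnected: at least 4 vertices and deleting any at most 2 vertices
leaves a connected graph. -/
def IsTriconnected [Fintype V] (G : SimpleGraph V) : Prop :=
  4 ≤ Fintype.card V ∧
    ∀ X : Set V, X.ncard ≤ 2 → (G.induce (Xᶜ : Set V)).Connected

/-- `x` and `y` both survive the deletion of `R` and lie in the same connected
component of `G − R`. -/
def ReachOutside (G : SimpleGraph V) (R : Set V) (x y : V) : Prop :=
  ∃ (hx : x ∈ (Rᶜ : Set V)) (hy : y ∈ (Rᶜ : Set V)),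
    (G.induce (Rᶜ : Set V)).Reachable ⟨x, hx⟩ ⟨y, hy⟩

/-- `R` splits `X`: two vertices of `X \ R` lie in different connected components
of `G − R`. -/
def Splits (G : SimpleGraph V) (R X : Set V) : Prop :=
  ∃ x ∈ X, ∃ y ∈ X, x ∉ R ∧ y ∉ R ∧ ¬ ReachOutside G R x y

/-- Two 3-cutsets are dependent iff one splits the other. -/
def Dependent (G : SimpleGraph V) (S T : Set V) : Prop :=
  Splits G S T ∨ Splits G T S

/-- The connected component of `G − R` containing `u` (empty if `u ∈ R`). -/
def compOutside (G : SimpleGraph V) (R : Set V) (u : V) : Set V :=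
  {y | ReachOutside G R u y}

/-- `C` is a connected component of `G − R`. -/
def IsCompOutside (G : SimpleGraph V) (R : Set V) (C : Set V) : Prop :=
  ∃ u, u ∉ R ∧ C = compOutside G R u

/-- The graph obtained from `G` by deleting the vertices of `A` (with all incident
edges) and the edges of `E`. -/
def DelVE (G : SimpleGraph V) (A : Set V) (E : Set (Sym2 V)) : SimpleGraph (Aᶜ : Set V) :=
  (G.deleteEdges E).induce (Aᶜ : Set V)

/-- The mixed set of vertices `A` and edges `E` disconnects `G`. -/
def CutVE (G : SimpleGraph V) (A : Set V) (E : Set (Sym2 V)) : Prop :=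
  ¬ (DelVE G A E).Connected

/-- `x` and `y` survive the deletion and lie in the same connected component of
the graph obtained by deleting the vertices of `A` and the edges of `E`. -/
def ReachVE (G : SimpleGraph V) (A : Set V) (E : Set (Sym2 V)) (x y : V) : Prop :=
  ∃ (hx : x ∈ (Aᶜ : Set V)) (hy : y ∈ (Aᶜ : Set V)),
    (DelVE G A E).Reachable ⟨x, hx⟩ ⟨y, hy⟩

/-- The connected component of `G − (A ∪ E)` containing `u`. -/
def compVE (G : SimpleGraph V) (A : Set V) (E : Set (Sym2 V)) (u : V) : Set V :=
  {y | ReachVE G A E u y}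

/-- `C` is a connected component of the graph obtained from `G` by deleting the
vertices of `A` and the edges of `E`. -/
def IsCompVE (G : SimpleGraph V) (A : Set V) (E : Set (Sym2 V)) (C : Set V) : Prop :=
  ∃ u, u ∉ A ∧ C = compVE G A E u

/-! ### Auxiliary infrastructure -/

private def RIn (H : SimpleGraph V) (s : Set V) (x y : V) : Prop :=
  ∃ (hx : x ∈ s) (hy : y ∈ s), (H.induce s).Reachable ⟨x, hx⟩ ⟨y, hy⟩

private lemma RIn.mem_left {H : SimpleGraph V} {s : Set V} {x y : V} (h : RIn H s x y) :
    x ∈ s := h.1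

private lemma RIn.mem_right {H : SimpleGraph V} {s : Set V} {x y : V} (h : RIn H s x y) :
    y ∈ s := h.2.1

private lemma rin_refl {H : SimpleGraph V} {s : Set V} {x : V} (hx : x ∈ s) : RIn H s x x :=
  ⟨hx, hx, SimpleGraph.Reachable.refl _⟩

private lemma RIn.symm {H : SimpleGraph V} {s : Set V} {x y : V} (h : RIn H s x y) :
    RIn H s y x := by
  obtain ⟨hx, hy, hr⟩ := h
  exact ⟨hy, hx, hr.symm⟩

private lemma RIn.trans {H : SimpleGraph V} {s : Set V} {x y z : V} (h : RIn H s x y)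
    (h' : RIn H s y z) : RIn H s x z := by
  obtain ⟨hx, hy, hr⟩ := h
  obtain ⟨hy', hz, hr'⟩ := h'
  exact ⟨hx, hz, hr.trans hr'⟩

private lemma rin_adj {H : SimpleGraph V} {s : Set V} {x y : V} (hx : x ∈ s) (hy : y ∈ s)
    (h : H.Adj x y) : RIn H s x y :=
  ⟨hx, hy, SimpleGraph.Adj.reachable (by exact h : (H.induce s).Adj ⟨x, hx⟩ ⟨y, hy⟩)⟩

private lemma rin_ind {H : SimpleGraph V} {s : Set V} {x : V} (P : V → Prop) (base : P x)
    (step : ∀ a b, a ∈ s → b ∈ s → RIn H s x a → P a → H.Adj a b → P b) :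
    ∀ y, RIn H s x y → P y := by
  have key : ∀ (a b : s) (_ : (H.induce s).Walk a b), RIn H s x a → P a → P b := by
    intro a b w
    induction w with
    | nil => exact fun _ h => h
    | @cons u c b hadj w ih =>
      intro hxu hPu
      have hadj' : H.Adj u c := hadj
      have hxc : RIn H s x c := hxu.trans (rin_adj u.2 c.2 hadj')
      exact ih hxc (step u c u.2 c.2 hxu hPu hadj')
  rintro y ⟨hx, hy, hr⟩
  exact key ⟨x, hx⟩ ⟨y, hy⟩ hr.some (rin_refl hx) base

private lemma rin_comp_eq {H : SimpleGraph V} {s : Set V} {x y : V} (h : RIn H s x y) :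
    {z | RIn H s x z} = {z | RIn H s y z} := by
  ext z
  exact ⟨fun hz => h.symm.trans hz, fun hz => h.trans hz⟩

private lemma compVE_eq (G : SimpleGraph V) (A : Set V) (E : Set (Sym2 V)) (u : V) :
    compVE G A E u = {y | RIn (G.deleteEdges E) Aᶜ u y} := rfl

private lemma compOutside_eq (G : SimpleGraph V) (R : Set V) (u : V) :
    compOutside G R u = {y | RIn G Rᶜ u y} := rfl

private lemma sym2_cases (z : Sym2 V) : ∃ a b, z = s(a, b) := by
  induction z using Sym2.ind with
  | _ a b => exact ⟨a, b, rfl⟩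

private lemma mem_mem_eq {e : Sym2 V} {x y : V} (hx : x ∈ e) (hy : y ∈ e) (hxy : x ≠ y) :
    e = s(x, y) := by
  obtain ⟨a, b, rfl⟩ := sym2_cases e
  rcases Sym2.mem_iff.mp hx with rfl | rfl <;> rcases Sym2.mem_iff.mp hy with rfl | rfl
  · exact absurd rfl hxy
  · rfl
  · rw [Sym2.eq_swap]
  · exact absurd rfl hxy

/-- Triconnectivity: a nonempty set `Q` whose boundary is contained in a set `N` of size at
most 2 cannot be separated from a vertex outside `Q ∪ N`. -/
private lemma cut_aux [Fintype V] {G : SimpleGraph V} (htri : IsTriconnected G)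
    {Q N : Set V} (hN : ∀ a b, a ∈ Q → G.Adj a b → b ∈ Q ∨ b ∈ N)
    (hQN : ∀ x ∈ Q, x ∉ N) {q : V} (hq : q ∈ Q) {w : V} (hw1 : w ∉ Q) (hw2 : w ∉ N) :
    ¬ N.ncard ≤ 2 := by
  intro hle
  have hcon := htri.2 N hle
  have hreach : RIn G Nᶜ q w := ⟨hQN q hq, hw2, hcon.preconnected _ _⟩
  have : w ∈ Q := by
    refine rin_ind (fun z => z ∈ Q) hq ?_ w hreach
    intro a b _ hb _ hPa hadj
    rcases hN a b hPa hadj with h | h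
    · exact h
    · exact absurd h hb
  exact hw1 this

/-! ### Lemmas about the two sides -/

private lemma compVE_not_mem_A {G : SimpleGraph V} {A : Set V} {E : Set (Sym2 V)} {u x : V}
    (hx : x ∈ compVE G A E u) : x ∉ A := hx.2.1

private lemma self_mem_compVE {G : SimpleGraph V} {A : Set V} {E : Set (Sym2 V)} {u : V}
    (hu : u ∉ A) : u ∈ compVE G A E u := rin_refl hu

private lemma compVE_disj {G : SimpleGraph V} {A : Set V} {E : Set (Sym2 V)} {u₁ u₂ : V}
    (hne : compVE G A E u₁ ≠ compVE G A E u₂) (x : V)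
    (h1 : x ∈ compVE G A E u₁) (h2 : x ∈ compVE G A E u₂) : False := by
  have h1' : RIn (G.deleteEdges E) Aᶜ u₁ x := h1
  have h2' : RIn (G.deleteEdges E) Aᶜ u₂ x := h2
  exact hne (by rw [compVE_eq, compVE_eq, rin_comp_eq (h1'.trans h2'.symm)])

private lemma ro_side {G : SimpleGraph V} {A R : Set V} {E : Set (Sym2 V)}
    (hAR : A ⊆ R) (hone : ∀ e ∈ E, ∀ v w : V, e = s(v, w) → (v ∈ R ↔ w ∉ R))
    {u x y : V} (hx : x ∈ compVE G A E u) (h : RIn G Rᶜ x y) : y ∈ compVE G A E u := by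
  refine rin_ind (fun z => z ∈ compVE G A E u) hx ?_ y h
  intro a b ha hb _ hPa hadj
  have haA : a ∉ A := compVE_not_mem_A hPa
  have hbA : b ∉ A := fun hbA => hb (hAR hbA)
  have hE : s(a, b) ∉ E := by
    intro hE
    exact ha ((hone _ hE a b rfl).mpr hb)
  have hPa' : RIn (G.deleteEdges E) Aᶜ u a := hPa
  exact hPa'.trans (rin_adj haA hbA (SimpleGraph.deleteEdges_adj.mpr ⟨hadj, hE⟩))

private lemma crossing {G : SimpleGraph V} {A : Set V} {E : Set (Sym2 V)} {u₁ u₂ : V}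
    (hne : compVE G A E u₁ ≠ compVE G A E u₂) {x y : V}
    (hx : x ∈ compVE G A E u₁) (hy : y ∈ compVE G A E u₂) (hadj : G.Adj x y) :
    s(x, y) ∈ E := by
  by_contra hE
  have hx' : RIn (G.deleteEdges E) Aᶜ u₁ x := hx
  have : y ∈ compVE G A E u₁ :=
    hx'.trans (rin_adj (compVE_not_mem_A hx) (compVE_not_mem_A hy)
      (SimpleGraph.deleteEdges_adj.mpr ⟨hadj, hE⟩))
  exact compVE_disj hne y this hy

/-- If one side were contained in `R`, triconnectivity would be violated. -/
private lemma side_nonempty [Fintype V] {G : SimpleGraph V} (htri : IsTriconnected G)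
    (hbig : 6 < Fintype.card V) {A : Set V} {E : Set (Sym2 V)}
    (hcard : A.ncard + E.ncard = 3) (hEne : E.Nonempty)
    {R : Set V} (hAR : A ⊆ R) (hRsub : R ⊆ A ∪ {v | ∃ e ∈ E, v ∈ e})
    (hone : ∀ e ∈ E, ∀ v w : V, e = s(v, w) → (v ∈ R ↔ w ∉ R))
    {u₁ u₂ : V} (hu₁ : u₁ ∉ A)
    (hne : compVE G A E u₁ ≠ compVE G A E u₂)
    (hcover : ∀ v, v ∉ A → v ∈ compVE G A E u₁ ∪ compVE G A E u₂)
    (hR3 : R.ncard ≤ 3)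
    (hR₁ : R ≠ A ∪ {v ∈ compVE G A E u₁ | ∃ e ∈ E, v ∈ e}) :
    ∃ p, p ∈ compVE G A E u₁ ∧ p ∉ R := by
  classical
  by_contra hcon
  push_neg at hcon
  set s₁ := compVE G A E u₁ with hs₁
  set s₂ := compVE G A E u₂ with hs₂
  have hsubset : A ∪ {v ∈ s₁ | ∃ e ∈ E, v ∈ e} ⊆ R := by
    rintro v (hv | ⟨hv1, -⟩)
    · exact hAR hv
    · exact hcon v hv1
  obtain ⟨r, hrR, hrn⟩ : ∃ r ∈ R, r ∉ A ∪ {v ∈ s₁ | ∃ e ∈ E, v ∈ e} := by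
    by_contra hno
    push_neg at hno
    exact hR₁ (subset_antisymm hno hsubset)
  have hrA : r ∉ A := fun h => hrn (Or.inl h)
  have hrend : ∃ e ∈ E, r ∈ e := by
    rcases hRsub hrR with h | h
    · exact absurd h hrA
    · exact h
  have hr2 : r ∈ s₂ := by
    rcases hcover r hrA with h | h
    · exact absurd (Or.inr ⟨h, hrend⟩) hrn
    · exact h
  obtain ⟨e_r, her, hre⟩ := hrend
  -- no vertex of `s₁` lies on `e_r`
  have hernotH1 : ∀ x ∈ s₁, x ∉ e_r := by
    intro x hx hxe
    by_cases hxr : x = r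
    · exact compVE_disj hne r (hxr ▸ hx) hr2
    · have hx' : e_r = s(x, r) := mem_mem_eq hxe hre hxr
      exact ((hone e_r her x r hx').mp (hcon x hx)) hrR
  -- the neighbourhood of `s₁`
  set N : Set V := {v | v ∉ s₁ ∧ ∃ x ∈ s₁, G.Adj x v} with hN
  set g : V → Sym2 V := fun v => if h : ∃ x ∈ s₁, G.Adj x v then s(h.choose, v) else s(v, v)
    with hg
  have hNA : (N \ A).ncard ≤ (E \ {e_r}).ncard := by
    refine Set.ncard_le_ncard_of_injOn g ?_ ?_ (Set.toFinite _)
    · rintro v ⟨⟨hv1, hv2⟩, hvA⟩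
      have hgv : g v = s(hv2.choose, v) := dif_pos hv2
      obtain ⟨hx1, hxadj⟩ := hv2.choose_spec
      have hv2' : v ∈ s₂ := by
        rcases hcover v hvA with h | h
        · exact absurd h hv1
        · exact h
      have hE : s(hv2.choose, v) ∈ E := crossing hne hx1 hv2' hxadj
      refine ⟨hgv ▸ hE, ?_⟩
      simp only [Set.mem_singleton_iff]
      intro hcontra
      rw [hgv] at hcontra
      exact hernotH1 hv2.choose hx1 (hcontra ▸ Sym2.mem_mk_left _ _)
    · rintro v ⟨⟨hv1, hv2⟩, hvA⟩ v' ⟨⟨hv1', hv2'⟩, hvA'⟩ heq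
      have hgv : g v = s(hv2.choose, v) := dif_pos hv2
      have hgv' : g v' = s(hv2'.choose, v') := dif_pos hv2'
      have hmem : v' ∈ s(hv2.choose, v) := by
        rw [← hgv, heq, hgv']
        exact Sym2.mem_mk_right _ _
      rcases Sym2.mem_iff.mp hmem with h | h
      · exact absurd (h ▸ hv2.choose_spec.1) hv1'
      · exact h.symm
  have hEr : (E \ {e_r}).ncard = E.ncard - 1 :=
    Set.ncard_sdiff_singleton_of_mem her
  have hEpos : 0 < E.ncard := (Set.ncard_pos (Set.toFinite _)).mpr hEne
  have hNle : N.ncard ≤ 2 := by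
    have h1 : N ⊆ A ∪ (N \ A) := by
      intro v hv
      by_cases hvA : v ∈ A
      · exact Or.inl hvA
      · exact Or.inr ⟨hv, hvA⟩
    calc N.ncard ≤ (A ∪ (N \ A)).ncard := Set.ncard_le_ncard h1 (Set.toFinite _)
      _ ≤ A.ncard + (N \ A).ncard := Set.ncard_union_le _ _
      _ ≤ A.ncard + (E.ncard - 1) := by rw [← hEr]; exact Nat.add_le_add_left hNA _
      _ ≤ 2 := by omega
  -- a vertex outside `s₁ ∪ N`
  obtain ⟨w, hw⟩ : ∃ w, w ∉ s₁ ∪ N := by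
    rw [← Set.ne_univ_iff_exists_notMem]
    intro huniv
    have h5 : (s₁ ∪ N).ncard ≤ 5 := by
      calc (s₁ ∪ N).ncard ≤ s₁.ncard + N.ncard := Set.ncard_union_le _ _
        _ ≤ R.ncard + N.ncard := Nat.add_le_add_right (Set.ncard_le_ncard hcon (Set.toFinite _)) _
        _ ≤ 5 := by omega
    rw [huniv, Set.ncard_univ, Nat.card_eq_fintype_card] at h5
    omega
  refine absurd hNle (cut_aux htri ?_ ?_ (self_mem_compVE hu₁ : u₁ ∈ s₁)
    (fun h => hw (Or.inl h)) (fun h => hw (Or.inr h)))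
  · intro a b ha hadj
    by_cases hb : b ∈ s₁
    · exact Or.inl hb
    · exact Or.inr ⟨hb, a, ha, hadj⟩
  · exact fun x hx hxN => hxN.1 hx

/-- Every vertex of `R` is adjacent to each connected component of `G − R`. -/
private lemma adj_comp [Fintype V] {G : SimpleGraph V} (htri : IsTriconnected G)
    {A R : Set V} {E : Set (Sym2 V)} (hAR : A ⊆ R)
    (hone : ∀ e ∈ E, ∀ v w : V, e = s(v, w) → (v ∈ R ↔ w ∉ R))
    (hcard3 : R.ncard = 3) {u₁ u₂ : V}
    (hne : compVE G A E u₁ ≠ compVE G A E u₂)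
    {p q y : V} (hp1 : p ∈ compVE G A E u₁) (hpR : p ∉ R)
    (hq2 : q ∈ compVE G A E u₂) (hqR : q ∉ R) (hyR : y ∈ R) :
    ∃ k, RIn G Rᶜ p k ∧ G.Adj k y := by
  by_contra hno
  push_neg at hno
  have hle : (R \ {y}).ncard ≤ 2 := by
    rw [Set.ncard_sdiff_singleton_of_mem hyR, hcard3]
  refine absurd hle (cut_aux htri (Q := {z | RIn G Rᶜ p z}) (N := R \ {y}) (w := q) ?_ ?_
    (rin_refl hpR) ?_ ?_)
  · intro a b ha hadj
    by_cases hbR : b ∈ R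
    · by_cases hby : b = y
      · exact absurd hadj (hby ▸ hno a ha)
      · exact Or.inr ⟨hbR, hby⟩
    · exact Or.inl (RIn.trans ha (rin_adj ha.mem_right hbR hadj))
  · exact fun x hx hxN => hx.mem_right hxN.1
  · intro h
    exact compVE_disj hne q (ro_side hAR hone hp1 h) hq2
  · exact fun h => hqR h.1

/-- `R` meets the second side. -/
private lemma exists_b [Fintype V] {G : SimpleGraph V} (htri : IsTriconnected G)
    {A R : Set V} {E : Set (Sym2 V)} (hAR : A ⊆ R)
    (hRsub : R ⊆ A ∪ {v | ∃ e ∈ E, v ∈ e})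
    (hone : ∀ e ∈ E, ∀ v w : V, e = s(v, w) → (v ∈ R ↔ w ∉ R))
    (hcard3 : R.ncard = 3)
    (hnotA : ∀ e ∈ E, ∀ a b : V, e = s(a, b) → a ∈ R → a ∉ A)
    (huniq : ∀ b ∈ R, b ∉ A → ∀ e ∈ E, b ∈ e → ∀ e' ∈ E, b ∈ e' → e = e')
    {u₁ u₂ : V} (hne : compVE G A E u₁ ≠ compVE G A E u₂)
    (hcover : ∀ v, v ∉ A → v ∈ compVE G A E u₁ ∪ compVE G A E u₂)
    {p₁ p₂ : V} (hp₁ : p₁ ∈ compVE G A E u₁) (hp₁R : p₁ ∉ R)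
    (hp₂ : p₂ ∈ compVE G A E u₂) (hp₂R : p₂ ∉ R)
    (hR₁ : R ≠ A ∪ {v ∈ compVE G A E u₁ | ∃ e ∈ E, v ∈ e}) :
    ∃ b, b ∈ R ∧ b ∈ compVE G A E u₂ := by
  by_contra hno
  push_neg at hno
  set s₁ := compVE G A E u₁ with hs₁
  set s₂ := compVE G A E u₂ with hs₂
  have hsubR : R ⊆ A ∪ {v ∈ s₁ | ∃ e ∈ E, v ∈ e} := by
    intro r hr
    by_cases hrA : r ∈ A
    · exact Or.inl hrA
    · have hrend : ∃ e ∈ E, r ∈ e := by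
        rcases hRsub hr with h | h
        · exact absurd h hrA
        · exact h
      rcases hcover r hrA with h | h
      · exact Or.inr ⟨h, hrend⟩
      · exact absurd h (hno r hr)
  obtain ⟨x, hxmem, hxR⟩ : ∃ x ∈ A ∪ {v ∈ s₁ | ∃ e ∈ E, v ∈ e}, x ∉ R := by
    by_contra h
    push_neg at h
    exact hR₁ (subset_antisymm hsubR h)
  have hxA : x ∉ A := fun h => hxR (hAR h)
  obtain ⟨hx1, f, hfE, hxf⟩ : x ∈ s₁ ∧ ∃ e ∈ E, x ∈ e := by
    rcases hxmem with h | h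
    · exact absurd h hxA
    · exact h
  obtain ⟨y, hfy⟩ := Sym2.mem_iff_exists.mp hxf
  have hyR : y ∈ R := by
    by_contra h
    exact hxR ((hone f hfE x y hfy).mpr h)
  have hyA : y ∉ A := hnotA f hfE y x (by rw [hfy, Sym2.eq_swap]) hyR
  have hy1 : y ∈ s₁ := by
    rcases hcover y hyA with h | h
    · exact h
    · exact absurd h (hno y hyR)
  obtain ⟨l, hl, hladj⟩ := adj_comp htri hAR hone hcard3 hne.symm hp₂ hp₂R hp₁ hp₁R hyR
  have hl2 : l ∈ s₂ := ro_side hAR hone hp₂ hl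
  have hlR : l ∉ R := hl.mem_right
  have hcross : s(l, y) ∈ E := crossing hne.symm hl2 hy1 hladj
  have heq : s(l, y) = f :=
    huniq y hyR hyA _ hcross (Sym2.mem_mk_right _ _) f hfE (hfy ▸ Sym2.mem_mk_right _ _)
  rw [hfy] at heq
  rcases Sym2.eq_iff.mp heq with ⟨h1, -⟩ | ⟨h1, h2⟩
  · exact compVE_disj hne x hx1 (h1 ▸ hl2)
  · exact hlR (h1 ▸ hyR)

/-- Any two vertices on the first side outside `R` are connected in `G − R`. -/
private lemma same_side_reach [Fintype V] {G : SimpleGraph V} (htri : IsTriconnected G)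
    {A R : Set V} {E : Set (Sym2 V)} (hAR : A ⊆ R)
    (hone : ∀ e ∈ E, ∀ v w : V, e = s(v, w) → (v ∈ R ↔ w ∉ R))
    (hcard3 : R.ncard = 3)
    (huniq : ∀ b ∈ R, b ∉ A → ∀ e ∈ E, b ∈ e → ∀ e' ∈ E, b ∈ e' → e = e')
    {u₁ u₂ : V} (hne : compVE G A E u₁ ≠ compVE G A E u₂)
    {b : V} (hbR : b ∈ R) (hb2 : b ∈ compVE G A E u₂)
    {p₂ : V} (hp₂ : p₂ ∈ compVE G A E u₂) (hp₂R : p₂ ∉ R)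
    {v v' : V} (hv : v ∈ compVE G A E u₁) (hvR : v ∉ R)
    (hv' : v' ∈ compVE G A E u₁) (hv'R : v' ∉ R) :
    RIn G Rᶜ v v' := by
  obtain ⟨k, hk, hkadj⟩ := adj_comp htri hAR hone hcard3 hne hv hvR hp₂ hp₂R hbR
  obtain ⟨k', hk', hk'adj⟩ := adj_comp htri hAR hone hcard3 hne hv' hv'R hp₂ hp₂R hbR
  have hk1 : k ∈ compVE G A E u₁ := ro_side hAR hone hv hk
  have hk1' : k' ∈ compVE G A E u₁ := ro_side hAR hone hv' hk'
  have hkR : k ∉ R := hk.mem_right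
  have hk'R : k' ∉ R := hk'.mem_right
  have he : s(k, b) ∈ E := crossing hne hk1 hb2 hkadj
  have he' : s(k', b) ∈ E := crossing hne hk1' hb2 hk'adj
  have heq : s(k, b) = s(k', b) :=
    huniq b hbR (compVE_not_mem_A hb2) _ he (Sym2.mem_mk_right _ _) _ he'
      (Sym2.mem_mk_right _ _)
  rcases Sym2.eq_iff.mp heq with ⟨rfl, -⟩ | ⟨h1, -⟩
  · exact hk.trans hk'.symm
  · exact absurd (h1 ▸ hbR) hkR

/-- Lemma `l30`(1): an inner set of a nontrivial cut is a cutset splitting `G`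
into exactly two parts, one containing `H₁ \ R` and the other `H₂ \ R`. -/
theorem stmt_11 [Fintype V] (G : SimpleGraph V)
    (htri : IsTriconnected G) (hbig : 6 < Fintype.card V)
    (A : Set V) (E : Set (Sym2 V))
    (hcard : A.ncard + E.ncard = 3) (hEsub : E ⊆ G.edgeSet)
    (hEne : E.Nonempty) (hcut : CutVE G A E)
    (H₁ H₂ : Set V) (hH₁ : IsCompVE G A E H₁) (hH₂ : IsCompVE G A E H₂)
    (hHne : H₁ ≠ H₂) (hcover : ∀ v, v ∉ A → v ∈ H₁ ∪ H₂)
    (hnt₁ : ∀ v : V, H₁ ≠ {v}) (hnt₂ : ∀ v : V, H₂ ≠ {v})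
    (R : Set V) (hAR : A ⊆ R)
    (hRsub : R ⊆ A ∪ {v | ∃ e ∈ E, v ∈ e})
    (hone : ∀ e ∈ E, ∀ v w : V, e = s(v, w) → (v ∈ R ↔ w ∉ R))
    (hR₁ : R ≠ A ∪ {v ∈ H₁ | ∃ e ∈ E, v ∈ e})
    (hR₂ : R ≠ A ∪ {v ∈ H₂ | ∃ e ∈ E, v ∈ e}) :
    IsCutset G R ∧
      ∃ C₁ C₂ : Set V, IsCompOutside G R C₁ ∧ IsCompOutside G R C₂ ∧ C₁ ≠ C₂ ∧
        (∀ v, v ∉ R → v ∈ C₁ ∪ C₂) ∧ H₁ \ R ⊆ C₁ ∧ H₂ \ R ⊆ C₂ := by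
  classical
  obtain ⟨u₁, hu₁A, rfl⟩ := hH₁
  obtain ⟨u₂, hu₂A, rfl⟩ := hH₂
  set s₁ := compVE G A E u₁ with hs₁
  set s₂ := compVE G A E u₂ with hs₂
  have hcover' : ∀ v, v ∉ A → v ∈ s₂ ∪ s₁ := fun v hv => (hcover v hv).symm
  -- the choice of one edge per vertex of `R \ A`
  set f : V → Sym2 V := fun r => if h : ∃ e ∈ E, r ∈ e then h.choose else s(r, r) with hfdef
  have hf : ∀ r ∈ R \ A, f r ∈ E ∧ r ∈ f r := by
    rintro r ⟨hr, hrA⟩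
    have hex : ∃ e ∈ E, r ∈ e := by
      rcases hRsub hr with h | h
      · exact absurd h hrA
      · exact h
    have : f r = hex.choose := dif_pos hex
    rw [this]
    exact hex.choose_spec
  have hfinj : Set.InjOn f (R \ A) := by
    rintro r hr r' hr' heq
    obtain ⟨he, hre⟩ := hf r hr
    obtain ⟨he', hre'⟩ := hf r' hr'
    rw [heq] at hre he
    by_contra hne
    have := mem_mem_eq hre hre' hne
    exact ((hone _ he' r r' this).mp hr.1) hr'.1
  have hRA_le : (R \ A).ncard ≤ E.ncard :=
    Set.ncard_le_ncard_of_injOn f (fun r hr => (hf r hr).1) hfinj (Set.toFinite _)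
  have hR3 : R.ncard ≤ 3 := by
    have h1 : R.ncard ≤ A.ncard + (R \ A).ncard := by
      calc R.ncard = (A ∪ (R \ A)).ncard := by rw [Set.union_diff_cancel hAR]
        _ ≤ A.ncard + (R \ A).ncard := Set.ncard_union_le _ _
    omega
  have hne : s₁ ≠ s₂ := hHne
  -- both sides have a vertex outside `R`
  obtain ⟨p₁, hp₁, hp₁R⟩ :=
    side_nonempty htri hbig hcard hEne hAR hRsub hone hu₁A hne hcover hR3 hR₁
  obtain ⟨p₂, hp₂, hp₂R⟩ :=
    side_nonempty htri hbig hcard hEne hAR hRsub hone hu₂A hne.symm hcover' hR3 hR₂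
  -- `R` has exactly three vertices
  have hcard3 : R.ncard = 3 := by
    have h2 : ¬ R.ncard ≤ 2 := by
      refine cut_aux htri (Q := {z | RIn G Rᶜ p₁ z}) (N := R) ?_ ?_ (rin_refl hp₁R) ?_ hp₂R
      · intro a b ha hadj
        by_cases hbR : b ∈ R
        · exact Or.inr hbR
        · exact Or.inl (RIn.trans ha (rin_adj ha.mem_right hbR hadj))
      · exact fun x hx => hx.mem_right
      · intro h
        exact compVE_disj hne p₂ (ro_side hAR hone hp₁ h) hp₂
    omega
  -- the choice map is a bijection onto `E`
  have himg : f '' (R \ A) = E := by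
    refine Set.eq_of_subset_of_ncard_le ?_ ?_ (Set.toFinite _)
    · rintro _ ⟨r, hr, rfl⟩
      exact (hf r hr).1
    · rw [Set.ncard_image_of_injOn hfinj, Set.ncard_diff hAR (Set.toFinite _), hcard3]
      omega
  have hsurjE : ∀ e ∈ E, ∃ r ∈ R \ A, f r = e := by
    intro e he
    rw [← himg] at he
    obtain ⟨r, hr, hfr⟩ := he
    exact ⟨r, hr, hfr⟩
  -- the endpoint of an edge lying in `R` is never in `A`
  have hnotA : ∀ e ∈ E, ∀ a b : V, e = s(a, b) → a ∈ R → a ∉ A := by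
    intro e he a b hab haR hA
    obtain ⟨r, hr, hfr⟩ := hsurjE e he
    have hrmem : r ∈ e := hfr ▸ (hf r hr).2
    have hbR : b ∉ R := (hone e he a b hab).mp haR
    have hra : r = a := by
      subst hab
      rcases Sym2.mem_iff.mp hrmem with h | h
      · exact h
      · exact absurd (h ▸ hr.1) hbR
    exact hr.2 (hra ▸ hA)
  -- each vertex of `R \ A` lies on a unique edge of `E`
  have huniq : ∀ b ∈ R, b ∉ A → ∀ e ∈ E, b ∈ e → ∀ e' ∈ E, b ∈ e' → e = e' := by
    intro b hbR hbA e he hbe e' he' hbe'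
    suffices key : ∀ e'' ∈ E, b ∈ e'' → f b = e'' by
      rw [← key e he hbe, key e' he' hbe']
    intro e'' he'' hbe''
    obtain ⟨r, hr, hfr⟩ := hsurjE e'' he''
    have hrmem : r ∈ e'' := hfr ▸ (hf r hr).2
    obtain ⟨c, hc⟩ := Sym2.mem_iff_exists.mp hbe''
    have hcR : c ∉ R := (hone e'' he'' b c hc).mp hbR
    have hrb : r = b := by
      subst hc
      rcases Sym2.mem_iff.mp hrmem with h | h
      · exact h
      · exact absurd (h ▸ hr.1) hcR
    rw [← hrb, hfr]
  -- `R` meets both sides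
  obtain ⟨b₂, hb₂R, hb₂⟩ := exists_b htri hAR hRsub hone hcard3 hnotA huniq hne hcover
    hp₁ hp₁R hp₂ hp₂R hR₁
  obtain ⟨b₁, hb₁R, hb₁⟩ := exists_b htri hAR hRsub hone hcard3 hnotA huniq hne.symm hcover'
    hp₂ hp₂R hp₁ hp₁R hR₂
  -- the two components
  have hreach₁ : ∀ v, v ∈ s₁ → v ∉ R → RIn G Rᶜ p₁ v := fun v hvmem hvR =>
    same_side_reach htri hAR hone hcard3 huniq hne hb₂R hb₂ hp₂ hp₂R hp₁ hp₁R hvmem hvR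
  have hreach₂ : ∀ v, v ∈ s₂ → v ∉ R → RIn G Rᶜ p₂ v := fun v hvmem hvR =>
    same_side_reach htri hAR hone hcard3 huniq hne.symm hb₁R hb₁ hp₁ hp₁R hp₂ hp₂R hvmem hvR
  constructor
  · intro hcon
    have h : RIn G Rᶜ p₁ p₂ := ⟨hp₁R, hp₂R, hcon.preconnected _ _⟩
    exact compVE_disj hne p₂ (ro_side hAR hone hp₁ h) hp₂
  · refine ⟨compOutside G R p₁, compOutside G R p₂, ⟨p₁, hp₁R, rfl⟩, ⟨p₂, hp₂R, rfl⟩, ?_, ?_, ?_, ?_⟩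
    · intro heq
      have h1 : p₁ ∈ compOutside G R p₁ := rin_refl hp₁R
      rw [heq] at h1
      exact compVE_disj hne p₁ hp₁ (ro_side hAR hone hp₂ (h1 : RIn G Rᶜ p₂ p₁))
    · intro v hvR
      have hvA : v ∉ A := fun h => hvR (hAR h)
      rcases hcover v hvA with h | h
      · exact Or.inl (hreach₁ v h hvR)
      · exact Or.inr (hreach₂ v h hvR)
    · rintro v ⟨hv, hvR⟩
      exact hreach₁ v hv hvR
    · rintro v ⟨hv, hvR⟩
      exact hreach₂ v hv hvR

end Paper
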